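/- Let p, m ≥ 1 be integers, let t_1 ≤ t_2 ≤ … ≤ t_p be real numbers, let s_1 ≥ s_2 ≥ … ≥ s_m be real numbers, and let c : {1,…,p} → {1,…,m} be injective. For k ∈ {1,…,p} define ℓ(k) := min(c_p, c_{p-1}, …, c_{p-k+1}). Then max_{k ∈ {1,…,p}} ( t_{p-k+1} + s_{ℓ(k)} ) = max_{i ∈ {1,…,p}} ( t_i + s_{c_i} ). -/
import Mathlib


/-- For a (0-indexed) `k : Fin p`, the index (0-indexed) in `Fin m` given by
`ℓ(k+1) - 1 = min (c_p, …, c_{p-k}) - 1`, i.e. the minimum of `c r` over the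
(0-indexed) rows `r` with `Fin.rev k ≤ r`. -/
noncomputable def ellIdx {p m : ℕ} (c : Fin p → Fin m) (k : Fin p) : Fin m :=
  (Finset.univ.filter fun r : Fin p => Fin.rev k ≤ r).inf' ⟨Fin.rev k, by simp⟩ c

/-- Let `t_1 ≤ … ≤ t_p`, `s_1 ≥ … ≥ s_m` and `c : {1,…,p} → {1,…,m}` injective, and
`ℓ(k) = min (c_p, …, c_{p-k+1})`. Then
`max_k (t_{p-k+1} + s_{ℓ(k)}) = max_i (t_i + s_{c_i})`
(in 0-indexed form, `Fin.rev k` encodes `p-k+1` and `ellIdx c k` encodes `ℓ(k)`). -/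
theorem weck_time_eq_canonical_time {p m : ℕ} (hp : 1 ≤ p) (hm : 1 ≤ m)
    (t : Fin p → ℝ) (ht : Monotone t)
    (s : Fin m → ℝ) (hs : Antitone s)
    (c : Fin p → Fin m) (hc : Function.Injective c) :
    (Finset.univ.sup' ⟨⟨0, hp⟩, Finset.mem_univ _⟩
        fun k : Fin p => t (Fin.rev k) + s (ellIdx c k)) =
      (Finset.univ.sup' ⟨⟨0, hp⟩, Finset.mem_univ _⟩
        fun i : Fin p => t i + s (c i)) := by
  apply le_antisymm
  · apply Finset.sup'_le
    intro k _
    obtain ⟨r, hr, hre⟩ := Finset.exists_mem_eq_inf'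
      (⟨Fin.rev k, by simp⟩ : (Finset.univ.filter fun r : Fin p => Fin.rev k ≤ r).Nonempty) c
    refine le_trans ?_ (Finset.le_sup' _ (Finset.mem_univ r))
    have hk : Fin.rev k ≤ r := by simpa using (Finset.mem_filter.mp hr).2
    have h1 := ht hk
    have h2 : ellIdx c k = c r := hre
    rw [h2]
    linarith
  · apply Finset.sup'_le
    intro i _
    refine le_trans ?_ (Finset.le_sup' _ (Finset.mem_univ (Fin.rev i)))
    have h1 : ellIdx c (Fin.rev i) ≤ c i := by
      apply Finset.inf'_le
      simp [Fin.rev_rev]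
    have h2 := hs h1
    simp only [Fin.rev_rev]
    linarith
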